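/- arXiv:2106.04887 — 2 statements merged into one kernel-verified Lean document; each statement's English description precedes it below -/
import Mathlib

section
/- (Lemma 3.) With probability at least 1 − δ over the draw of the dataset D of n i.i.d. triples collected with the uniform policy, the following implication holds: if the empirical maximizer (π̂, ψ̂) satisfies V̂_D(π̂,ψ̂) − V̂_D(π_u,ψ̂) > V(π_u) + K·ε_D, then Δψ̂ > 0 and V(π̂) ≥ V(π⋆) − 2K·ε_D / Δψ⋆. -/
open MeasureTheory ENNReal Finset

noncomputable section


lemma hoeff_scalar (p : ℝ) (hp0 : 0 ≤ p) (hp1 : p ≤ 1) (h : ℝ) :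
    (1 - p) + p * Real.exp h ≤ Real.exp (p * h + h ^ 2 / 8) := by
  set c : ℝ := 1 - p with hc
  have hc0 : 0 ≤ c := by simp [hc]; linarith
  have hden : ∀ x : ℝ, 0 < c + p * Real.exp x := by
    intro x
    rcases eq_or_lt_of_le hp0 with h0 | h0
    · simp [hc, ← h0]
    · have := Real.exp_pos x
      nlinarith
  set g : ℝ → ℝ := fun h => p * h + h ^ 2 / 8 - Real.log (c + p * Real.exp h) with hg
  set g1 : ℝ → ℝ := fun h => p + h / 4 - p * Real.exp h / (c + p * Real.exp h) with hg1
  have hderiv : ∀ x : ℝ, HasDerivAt g (g1 x) x := by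
    intro x
    have h1 : HasDerivAt (fun h : ℝ => c + p * Real.exp h) (p * Real.exp x) x := by
      simpa using ((Real.hasDerivAt_exp x).const_mul p).const_add c
    have h2 : HasDerivAt (fun h : ℝ => Real.log (c + p * Real.exp h))
        (p * Real.exp x / (c + p * Real.exp x)) x := h1.log (hden x).ne'
    have h3 : HasDerivAt (fun h : ℝ => p * h + h ^ 2 / 8) (p + x / 4) x := by
      have := ((hasDerivAt_pow 2 x).div_const 8).const_add 0
      have h4 : HasDerivAt (fun h : ℝ => p * h) p x := by
        simpa using (hasDerivAt_id x).const_mul p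
      simpa [mul_comm, Pi.add_def] using h4.add (((hasDerivAt_pow 2 x).div_const 8) |>.congr_deriv (by ring))
    simpa [hg1, Pi.sub_def] using h3.sub h2
  have hderiv1 : ∀ x : ℝ, HasDerivAt g1
      (1 / 4 - p * Real.exp x * c / (c + p * Real.exp x) ^ 2) x := by
    intro x
    have h1 : HasDerivAt (fun h : ℝ => c + p * Real.exp h) (p * Real.exp x) x := by
      simpa using ((Real.hasDerivAt_exp x).const_mul p).const_add c
    have h2 : HasDerivAt (fun h : ℝ => p * Real.exp h) (p * Real.exp x) x :=
      (Real.hasDerivAt_exp x).const_mul p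
    have h3 : HasDerivAt (fun h : ℝ => p * Real.exp h / (c + p * Real.exp h))
        ((p * Real.exp x * (c + p * Real.exp x) - p * Real.exp x * (p * Real.exp x)) /
          (c + p * Real.exp x) ^ 2) x := h2.div h1 (hden x).ne'
    have h4 : HasDerivAt (fun h : ℝ => p + h / 4) (1 / 4) x := by
      simpa using ((hasDerivAt_id x).div_const 4).const_add p
    have := h4.sub h3
    refine this.congr_deriv ?_
    ring
  have hg2 : ∀ x : ℝ, 0 ≤ 1 / 4 - p * Real.exp x * c / (c + p * Real.exp x) ^ 2 := by
    intro x
    have hd := hden x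
    have hu : 0 ≤ p * Real.exp x := mul_nonneg hp0 (Real.exp_pos x).le
    have key : p * Real.exp x * c / (c + p * Real.exp x) ^ 2 ≤ 1 / 4 := by
      rw [div_le_iff₀ (by positivity)]
      nlinarith [sq_nonneg (c - p * Real.exp x)]
    linarith
  have hg1mono : Monotone g1 :=
    monotone_of_deriv_nonneg (fun x => (hderiv1 x).differentiableAt)
      (fun x => by rw [(hderiv1 x).deriv]; exact hg2 x)
  have hg1zero : g1 0 = 0 := by
    simp only [hg1]
    rw [Real.exp_zero]
    have : c + p * 1 = 1 := by simp [hc]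
    rw [this]
    ring
  have hgzero : g 0 = 0 := by
    simp only [hg]
    rw [Real.exp_zero]
    have : c + p * 1 = 1 := by simp [hc]
    rw [this]
    simp
  have hgnonneg : ∀ x : ℝ, 0 ≤ g x := by
    intro x
    rcases le_or_gt 0 x with hx | hx
    · have hmono : MonotoneOn g (Set.Ici (0:ℝ)) := by
        apply monotoneOn_of_deriv_nonneg (convex_Ici 0)
          (Continuous.continuousOn (by
            have : ∀ x, DifferentiableAt ℝ g x := fun x => (hderiv x).differentiableAt
            exact (Differentiable.continuous (fun x => this x))))
        · intro x hx
          exact ((hderiv x).differentiableAt).differentiableWithinAt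
        · intro y hy
          rw [(hderiv y).deriv]
          have : (0:ℝ) ≤ y := le_of_lt (by simpa using hy)
          calc (0:ℝ) = g1 0 := hg1zero.symm
          _ ≤ g1 y := hg1mono this
      have := hmono (Set.mem_Ici.mpr le_rfl) (Set.mem_Ici.mpr hx) hx
      rw [hgzero] at this; exact this
    · have hanti : AntitoneOn g (Set.Iic (0:ℝ)) := by
        apply antitoneOn_of_deriv_nonpos (convex_Iic 0)
          (Continuous.continuousOn (by
            have : ∀ x, DifferentiableAt ℝ g x := fun x => (hderiv x).differentiableAt
            exact (Differentiable.continuous (fun x => this x))))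
        · intro x hx
          exact ((hderiv x).differentiableAt).differentiableWithinAt
        · intro y hy
          rw [(hderiv y).deriv]
          have hy0 : y ≤ (0:ℝ) := le_of_lt (by simpa using hy)
          calc g1 y ≤ g1 0 := hg1mono hy0
          _ = 0 := hg1zero
      have := hanti (Set.mem_Iic.mpr hx.le) (Set.mem_Iic.mpr le_rfl) hx.le
      rw [hgzero] at this; exact this
  have hlog : Real.log (c + p * Real.exp h) ≤ p * h + h ^ 2 / 8 := by
    have := hgnonneg h
    simp only [hg] at this; linarith
  calc (1 - p) + p * Real.exp h = c + p * Real.exp h := by rw [hc]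
  _ = Real.exp (Real.log (c + p * Real.exp h)) := (Real.exp_log (hden h)).symm
  _ ≤ Real.exp (p * h + h ^ 2 / 8) := Real.exp_le_exp.mpr hlog

open MeasureTheory in
lemma integrable_of_bdd {Ω : Type*} [MeasurableSpace Ω] {μ : Measure Ω} [IsFiniteMeasure μ]
    {f : Ω → ℝ} (hf : Measurable f) (C : ℝ) (hC : ∀ ω, |f ω| ≤ C) : Integrable f μ := by
  refine ⟨hf.aestronglyMeasurable, ?_⟩
  apply MeasureTheory.HasFiniteIntegral.of_bounded (C := C)
  filter_upwards with ω using hC ω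

open MeasureTheory in
lemma hoeff_mgf {Ω : Type*} [MeasurableSpace Ω] (μ : Measure Ω) [IsProbabilityMeasure μ]
    (Z : Ω → ℝ) (hZ : Measurable Z) (a b : ℝ) (hab : ∀ ω, Z ω ∈ Set.Icc a b)
    (hmean : ∫ ω, Z ω ∂μ = 0) (t : ℝ) :
    ∫ ω, Real.exp (t * Z ω) ∂μ ≤ Real.exp (t ^ 2 * (b - a) ^ 2 / 8) := by
  have hZint : Integrable Z μ :=
    integrable_of_bdd hZ (max |a| |b|) (fun ω => abs_le_max_abs_abs (hab ω).1 (hab ω).2)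
  have ha0 : a ≤ 0 := by
    have h1 : ∫ _ : Ω, a ∂μ ≤ ∫ ω, Z ω ∂μ :=
      integral_mono (integrable_const a) hZint (fun ω => (hab ω).1)
    simpa [hmean] using h1
  have hb0 : 0 ≤ b := by
    have h1 : ∫ ω, Z ω ∂μ ≤ ∫ _ : Ω, b ∂μ :=
      integral_mono hZint (integrable_const b) (fun ω => (hab ω).2)
    simpa [hmean] using h1
  rcases eq_or_lt_of_le (ha0.trans hb0) with heq | hlt
  · -- a = b = 0, Z = 0
    have ha : a = 0 := le_antisymm ha0 (by rw [heq]; exact hb0)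
    have hb : b = 0 := by rw [← heq, ha]
    have hZ0 : ∀ ω, Z ω = 0 := by
      intro ω
      have := hab ω
      rw [ha, hb] at this
      exact le_antisymm this.2 this.1
    simp only [hZ0, mul_zero, Real.exp_zero]
    rw [integral_const]
    simp
    positivity
  · -- a < b
    have hba : (0:ℝ) < b - a := by linarith
    set p : ℝ := -a / (b - a) with hp
    have hp0 : 0 ≤ p := div_nonneg (by linarith) hba.le
    have hp1 : p ≤ 1 := by rw [hp, div_le_one hba]; linarith
    have h1p : 1 - p = b / (b - a) := by rw [hp]; field_simp; ring
    -- pointwise convexity bound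
    have hpt : ∀ ω, Real.exp (t * Z ω) ≤
        (b - Z ω) / (b - a) * Real.exp (t * a) + (Z ω - a) / (b - a) * Real.exp (t * b) := by
      intro ω
      rcases hab ω with ⟨h1, h2⟩
      have hl1 : 0 ≤ (b - Z ω) / (b - a) := div_nonneg (by linarith) hba.le
      have hl2 : 0 ≤ (Z ω - a) / (b - a) := div_nonneg (by linarith) hba.le
      have hsum : (b - Z ω) / (b - a) + (Z ω - a) / (b - a) = 1 := by field_simp; ring
      have := convexOn_exp.2 (Set.mem_univ (t * a)) (Set.mem_univ (t * b)) hl1 hl2 hsum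
      convert this using 2
      · rfl
      · simp only [smul_eq_mul]
        field_simp
        ring
      · rfl
      · rfl
    -- integrate
    have hintL : Integrable (fun ω => Real.exp (t * Z ω)) μ := by
      refine integrable_of_bdd (hZ.const_mul t).exp (Real.exp (max (t*a) (t*b))) (fun ω => ?_)
      rw [abs_of_pos (Real.exp_pos _), Real.exp_le_exp]
      rcases hab ω with ⟨h1, h2⟩
      rcases le_or_gt 0 t with ht | ht
      · exact le_trans (by nlinarith) (le_max_right _ _)
      · exact le_trans (by nlinarith) (le_max_left _ _)
    have hintR : Integrable
        (fun ω => (b - Z ω) / (b - a) * Real.exp (t * a) + (Z ω - a) / (b - a) * Real.exp (t * b)) μ := by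
      apply Integrable.add
      · exact ((((integrable_const b).sub hZint).div_const _).mul_const _)
      · exact (((hZint.sub (integrable_const a)).div_const _).mul_const _)
    have hle : ∫ ω, Real.exp (t * Z ω) ∂μ ≤
        ∫ ω, ((b - Z ω) / (b - a) * Real.exp (t * a) + (Z ω - a) / (b - a) * Real.exp (t * b)) ∂μ :=
      integral_mono hintL hintR hpt
    have hval : ∫ ω, ((b - Z ω) / (b - a) * Real.exp (t * a) + (Z ω - a) / (b - a) * Real.exp (t * b)) ∂μ
        = (1 - p) * Real.exp (t * a) + p * Real.exp (t * b) := by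
      have : ∀ ω, (b - Z ω) / (b - a) * Real.exp (t * a) + (Z ω - a) / (b - a) * Real.exp (t * b)
          = (Real.exp (t*a) * (b/(b-a)) + Real.exp (t*b) * (-a/(b-a)))
            + (Real.exp (t*b) / (b-a) - Real.exp (t*a) / (b-a)) * Z ω := by
        intro ω; field_simp; ring
      simp_rw [this]
      rw [integral_add (integrable_const _) (hZint.const_mul _), integral_const,
        integral_const_mul, hmean]
      simp [h1p, hp]
      field_simp
      ring
    rw [hval] at hle
    refine hle.trans ?_
    have key := hoeff_scalar p hp0 hp1 (t * (b - a))
    have : (1 - p) * Real.exp (t * a) + p * Real.exp (t * b)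
        = Real.exp (t * a) * ((1 - p) + p * Real.exp (t * (b - a))) := by
      have hexp : Real.exp (t*a) * Real.exp (t*(b-a)) = Real.exp (t*b) := by
        rw [← Real.exp_add]; ring_nf
      linear_combination (-p) * hexp
    rw [this]
    calc Real.exp (t * a) * ((1 - p) + p * Real.exp (t * (b - a)))
        ≤ Real.exp (t * a) * Real.exp (p * (t * (b - a)) + (t * (b - a)) ^ 2 / 8) := by
          apply mul_le_mul_of_nonneg_left key (Real.exp_pos _).le
      _ = Real.exp (t * a + (p * (t * (b - a)) + (t * (b - a)) ^ 2 / 8)) := by rw [← Real.exp_add]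
      _ = Real.exp (t ^ 2 * (b - a) ^ 2 / 8) := by
          congr 1
          have : t * a + p * (t * (b - a)) = 0 := by
            rw [hp]; field_simp; ring
          rw [mul_pow]; linarith

open MeasureTheory ProbabilityTheory in
lemma iIndepFun_eval_pi {n : ℕ} {α : Type*} [MeasurableSpace α]
    (μ : Measure α) [IsProbabilityMeasure μ] :
    iIndepFun (fun i (ω : Fin n → α) => ω i)
      (Measure.pi fun _ => μ) := by
  rw [iIndepFun_iff_measure_inter_preimage_eq_mul]
  intro S sets hsets
  classical
  have key : ∀ (T : ∀ i : Fin n, Set α), (∀ i, MeasurableSet (T i)) →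
      Measure.pi (fun _ => μ) ((fun ω : Fin n → α => ω) ⁻¹' Set.pi Set.univ T) = ∏ i, μ (T i) := by
    intro T hT
    simpa using Measure.pi_pi (fun _ => μ) T
  have h1 : (⋂ i ∈ S, (fun ω : Fin n → α => ω i) ⁻¹' sets i)
      = Set.pi Set.univ (fun i => if i ∈ S then sets i else Set.univ) := by
    ext ω
    simp only [Set.mem_iInter, Set.mem_preimage, Set.mem_pi, Set.mem_univ, true_implies]
    constructor
    · intro h i
      by_cases hi : i ∈ S
      · simpa [hi] using h i hi
      · simp [hi]
    · intro h i hi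
      have := h i
      simpa [hi] using this
  have h2 : ∀ i : Fin n, (fun ω : Fin n → α => ω i) ⁻¹' sets i
      = Set.pi Set.univ (Function.update (fun _ => Set.univ) i (sets i)) := by
    intro i
    ext ω
    simp only [Set.mem_preimage, Set.mem_pi, Set.mem_univ, true_implies]
    constructor
    · intro h j
      rcases eq_or_ne j i with rfl | hj
      · simpa using h
      · simp [Function.update_of_ne hj]
    · intro h
      simpa using h i
  rw [h1, Measure.pi_pi]
  have h3 : ∀ i ∈ S, Measure.pi (fun _ : Fin n => μ) ((fun ω : Fin n → α => ω i) ⁻¹' sets i)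
      = μ (sets i) := by
    intro i hi
    rw [h2 i, Measure.pi_pi]
    rw [Finset.prod_eq_single i]
    · simp
    · intro j _ hj
      simp [Function.update_of_ne hj]
    · simp
  rw [Finset.prod_congr rfl h3]
  rw [← Finset.prod_subset (Finset.subset_univ S)
    (f := fun i => μ (if i ∈ S then sets i else Set.univ)) (by intro i _ hi; simp [hi])]
  exact Finset.prod_congr rfl (fun i hi => by simp [hi])

open MeasureTheory in
lemma integrable_exp_bdd {Ω : Type*} [MeasurableSpace Ω] {μ : Measure Ω} [IsFiniteMeasure μ]
    {f : Ω → ℝ} (hf : Measurable f) {c d : ℝ} (h : ∀ ω, f ω ∈ Set.Icc c d) (s : ℝ) :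
    Integrable (fun ω => Real.exp (s * f ω)) μ := by
  refine integrable_of_bdd (hf.const_mul s).exp (Real.exp (max (s*c) (s*d))) (fun ω => ?_)
  rw [abs_of_pos (Real.exp_pos _), Real.exp_le_exp]
  rcases h ω with ⟨h1, h2⟩
  rcases le_or_gt 0 s with hs | hs
  · exact le_trans (by nlinarith) (le_max_right _ _)
  · exact le_trans (by nlinarith) (le_max_left _ _)

open MeasureTheory ProbabilityTheory in
lemma map_eval_pi {n : ℕ} {α : Type*} [MeasurableSpace α]
    (μ : Measure α) [IsProbabilityMeasure μ] (i : Fin n) :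
    (Measure.pi fun _ : Fin n => μ).map (fun ω => ω i) = μ := by
  classical
  apply Measure.ext
  intro s hs
  rw [Measure.map_apply (measurable_pi_apply i) hs]
  have h2 : (fun ω : Fin n → α => ω i) ⁻¹' s
      = Set.pi Set.univ (Function.update (fun _ => Set.univ) i s) := by
    ext ω
    simp only [Set.mem_preimage, Set.mem_pi, Set.mem_univ, true_implies]
    constructor
    · intro h j
      rcases eq_or_ne j i with rfl | hj
      · simpa using h
      · simp [Function.update_of_ne hj]
    · intro h
      simpa using h i
  rw [h2, Measure.pi_pi, Finset.prod_eq_single i]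
  · simp
  · intro j _ hj
    simp [Function.update_of_ne hj]
  · simp

open MeasureTheory ProbabilityTheory in
/-- Hoeffding's inequality, upper tail, for i.i.d. samples. -/
lemma hoeff_tail_upper {α : Type*} [MeasurableSpace α] (μ : Measure α) [IsProbabilityMeasure μ]
    (Z : α → ℝ) (hZ : Measurable Z) (a b : ℝ) (hlt : a < b) (hab : ∀ ω, Z ω ∈ Set.Icc a b)
    (n : ℕ) (hn : 0 < n) (t : ℝ) (ht : 0 ≤ t) :
    Measure.pi (fun _ : Fin n => μ)
      {D | (∫ z, Z z ∂μ) + t ≤ (n:ℝ)⁻¹ * ∑ i, Z (D i)}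
      ≤ ENNReal.ofReal (Real.exp (-2 * n * t ^ 2 / (b - a) ^ 2)) := by
  classical
  set m : ℝ := ∫ z, Z z ∂μ with hm
  set PP : Measure (Fin n → α) := Measure.pi fun _ : Fin n => μ with hPP
  set X : Fin n → (Fin n → α) → ℝ := fun i D => Z (D i) - m with hX
  have hXmeas : ∀ i, Measurable (X i) := fun i => (hZ.comp (measurable_pi_apply i)).sub_const m
  have hindep : iIndepFun X PP := by
    have := (iIndepFun_eval_pi (n := n) μ).comp (fun _ z => Z z - m)
      (fun _ => hZ.sub_const m)
    exact this
  have hXbdd : ∀ i D, X i D ∈ Set.Icc (a - m) (b - m) := by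
    intro i D
    rcases hab (D i) with ⟨h1, h2⟩
    exact ⟨by simp [hX]; linarith, by simp [hX]; linarith⟩
  have hXmean : ∀ i, ∫ D, X i D ∂PP = 0 := by
    intro i
    have hmap : ∫ D, Z (D i) ∂PP = m := by
      rw [hm, ← map_eval_pi μ i, integral_map (measurable_pi_apply i).aemeasurable
        hZ.aestronglyMeasurable]
    have hZi : Integrable (fun D => Z (D i)) PP :=
      integrable_of_bdd (hZ.comp (measurable_pi_apply i)) (max |a| |b|)
        (fun D => abs_le_max_abs_abs (hab (D i)).1 (hab (D i)).2)
    rw [hX]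
    simp only
    rw [integral_sub hZi (integrable_const m), hmap, integral_const]
    simp
  -- event inclusion
  have hevent : {D : Fin n → α | m + t ≤ (n:ℝ)⁻¹ * ∑ i, Z (D i)}
      ⊆ {D | (n:ℝ) * t ≤ (∑ i, X i) D} := by
    intro D hD
    simp only [Set.mem_setOf_eq] at hD ⊢
    have hn' : (0:ℝ) < n := Nat.cast_pos.mpr hn
    have : (∑ i, X i) D = (∑ i, Z (D i)) - n * m := by
      simp only [hX, Finset.sum_apply, Finset.sum_sub_distrib, Finset.sum_const,
        Finset.card_univ, Fintype.card_fin, nsmul_eq_mul]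
    rw [this]
    rw [inv_mul_eq_div, le_div_iff₀ hn'] at hD
    nlinarith
  set s : ℝ := 4 * t / (b - a) ^ 2 with hs
  have hs0 : 0 ≤ s := by positivity
  have hmgf_each : ∀ i, mgf (X i) PP s ≤ Real.exp (s ^ 2 * (b - a) ^ 2 / 8) := by
    intro i
    have h := hoeff_mgf PP (X i) (hXmeas i) (a - m) (b - m) (hXbdd i) (hXmean i) s
    rw [show b - m - (a - m) = b - a by ring] at h
    simpa [mgf] using h
  have hint_each : ∀ i, Integrable (fun D => Real.exp (s * X i D)) PP :=
    fun i => integrable_exp_bdd (hXmeas i) (hXbdd i) s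
  have hint_sum : Integrable (fun D => Real.exp (s * (∑ i, X i) D)) PP := by
    refine integrable_exp_bdd (f := fun D => (∑ i, X i) D) (by
      simp only [Finset.sum_apply]
      exact Finset.measurable_sum Finset.univ (fun i _ => hXmeas i))
      (c := n * (a - m)) (d := n * (b - m)) (fun D => ?_) s
    constructor
    · simp only [Finset.sum_apply]
      calc (n : ℝ) * (a - m) = ∑ _i : Fin n, (a - m) := by simp [mul_comm]; ring
      _ ≤ ∑ i, X i D := Finset.sum_le_sum (fun i _ => (hXbdd i D).1)
    · simp only [Finset.sum_apply]
      calc ∑ i, X i D ≤ ∑ _i : Fin n, (b - m) := Finset.sum_le_sum (fun i _ => (hXbdd i D).2)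
      _ = (n : ℝ) * (b - m) := by simp [mul_comm]; ring
  have hchern := measure_ge_le_exp_mul_mgf (μ := PP) (X := ∑ i, X i) ((n:ℝ) * t) hs0 hint_sum
  rw [hindep.mgf_sum hXmeas] at hchern
  have hmgf_prod : ∏ i, mgf (X i) PP s ≤ Real.exp ((n:ℝ) * (s ^ 2 * (b - a) ^ 2 / 8)) := by
    calc ∏ i, mgf (X i) PP s ≤ ∏ _i : Fin n, Real.exp (s ^ 2 * (b - a) ^ 2 / 8) :=
          Finset.prod_le_prod (fun i _ => mgf_nonneg) (fun i _ => hmgf_each i)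
    _ = Real.exp ((n:ℝ) * (s ^ 2 * (b - a) ^ 2 / 8)) := by
        rw [Finset.prod_const, ← Real.exp_nat_mul]
        simp
  have hfinal : (PP {D | (n:ℝ) * t ≤ (∑ i, X i) D}).toReal
      ≤ Real.exp (-2 * n * t ^ 2 / (b - a) ^ 2) := by
    refine hchern.trans ?_
    calc Real.exp (-s * ((n:ℝ) * t)) * ∏ i, mgf (X i) PP s
        ≤ Real.exp (-s * ((n:ℝ) * t)) * Real.exp ((n:ℝ) * (s ^ 2 * (b - a) ^ 2 / 8)) := by
          apply mul_le_mul_of_nonneg_left hmgf_prod (Real.exp_pos _).le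
      _ = Real.exp (-s * ((n:ℝ) * t) + (n:ℝ) * (s ^ 2 * (b - a) ^ 2 / 8)) := by
          rw [← Real.exp_add]
      _ = Real.exp (-2 * n * t ^ 2 / (b - a) ^ 2) := by
          congr 1
          rw [hs]
          have hba : (b - a) ^ 2 ≠ 0 := pow_ne_zero 2 (sub_ne_zero.mpr hlt.ne')
          field_simp
          ring
  have hne : PP {D | (n:ℝ) * t ≤ (∑ i, X i) D} ≠ ⊤ := measure_ne_top _ _
  calc PP {D | m + t ≤ (n:ℝ)⁻¹ * ∑ i, Z (D i)} ≤ PP {D | (n:ℝ) * t ≤ (∑ i, X i) D} :=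
        measure_mono hevent
  _ = ENNReal.ofReal ((PP {D | (n:ℝ) * t ≤ (∑ i, X i) D}).toReal) := (ENNReal.ofReal_toReal hne).symm
  _ ≤ ENNReal.ofReal (Real.exp (-2 * n * t ^ 2 / (b - a) ^ 2)) := ENNReal.ofReal_le_ofReal hfinal
open MeasureTheory ProbabilityTheory in
/-- Hoeffding's inequality, lower tail, for i.i.d. samples. -/
lemma hoeff_tail_lower {α : Type*} [MeasurableSpace α] (μ : Measure α) [IsProbabilityMeasure μ]
    (Z : α → ℝ) (hZ : Measurable Z) (a b : ℝ) (hlt : a < b) (hab : ∀ ω, Z ω ∈ Set.Icc a b)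
    (n : ℕ) (hn : 0 < n) (t : ℝ) (ht : 0 ≤ t) :
    Measure.pi (fun _ : Fin n => μ)
      {D | (n:ℝ)⁻¹ * ∑ i, Z (D i) ≤ (∫ z, Z z ∂μ) - t}
      ≤ ENNReal.ofReal (Real.exp (-2 * n * t ^ 2 / (b - a) ^ 2)) := by
  have key := hoeff_tail_upper μ (fun ω => -Z ω) hZ.neg (-b) (-a) (by linarith)
    (fun ω => ⟨neg_le_neg (hab ω).2, neg_le_neg (hab ω).1⟩) n hn t ht
  have hint : ∫ z, -Z z ∂μ = -∫ z, Z z ∂μ := integral_neg Z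
  have hset : {D : Fin n → α | (∫ z, -Z z ∂μ) + t ≤ (n:ℝ)⁻¹ * ∑ i, -Z (D i)}
      = {D | (n:ℝ)⁻¹ * ∑ i, Z (D i) ≤ (∫ z, Z z ∂μ) - t} := by
    ext D
    simp only [Set.mem_setOf_eq, hint, Finset.sum_neg_distrib, mul_neg]
    constructor <;> intro h <;> linarith
  rw [hset] at key
  have hba : -a - -b = b - a := by ring
  rw [hba] at key
  exact key


open MeasureTheory in
lemma isProbabilityMeasure_bind {α β : Type*} [MeasurableSpace α] [MeasurableSpace β]
    (m : Measure α) [IsProbabilityMeasure m] (κ : α → Measure β) (hκ : Measurable κ)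
    (hκp : ∀ x, IsProbabilityMeasure (κ x)) : IsProbabilityMeasure (m.bind κ) := by
  constructor
  rw [Measure.bind_apply MeasurableSet.univ hκ.aemeasurable]
  have : ∀ x, κ x Set.univ = 1 := fun x => (hκp x).measure_univ
  simp [this]

open MeasureTheory in
lemma integral_bind_of_bdd {α β : Type*} [MeasurableSpace α] [MeasurableSpace β]
    (m : Measure α) [IsProbabilityMeasure m] (κ : α → Measure β) (hκ : Measurable κ)
    (hκp : ∀ x, IsProbabilityMeasure (κ x)) (f : β → ℝ) (hf : Measurable f)
    (C : ℝ) (hbd : ∀ y, |f y| ≤ C) :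
    ∫ y, f y ∂(m.bind κ) = ∫ x, (∫ y, f y ∂(κ x)) ∂m := by
  have hbind : IsProbabilityMeasure (m.bind κ) := isProbabilityMeasure_bind m κ hκ hκp
  set g : β → ℝ := fun y => f y + C with hgdef
  have hgmeas : Measurable g := hf.add_const C
  have hg0 : ∀ y, 0 ≤ g y := fun y => by have := abs_le.mp (hbd y); simp only [hgdef]; linarith
  have hg2C : ∀ y, g y ≤ 2 * C := fun y => by
    have := abs_le.mp (hbd y); simp only [hgdef]; linarith
  have hgabs : ∀ y, |g y| ≤ 2 * C := fun y => by
    rw [abs_of_nonneg (hg0 y)]; exact hg2C y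
  set G : α → ℝ := fun x => ∫ y, g y ∂(κ x) with hGdef
  have hGmeas : Measurable G := by
    have h1 : Measurable fun x => ∫⁻ y, ENNReal.ofReal (g y) ∂(κ x) :=
      (Measure.measurable_lintegral (ENNReal.measurable_ofReal.comp hgmeas)).comp hκ
    have h2 : ∀ x, G x = (∫⁻ y, ENNReal.ofReal (g y) ∂(κ x)).toReal := by
      intro x
      rw [hGdef]
      exact integral_eq_lintegral_of_nonneg_ae (ae_of_all _ hg0) hgmeas.aestronglyMeasurable
    rw [show G = fun x => (∫⁻ y, ENNReal.ofReal (g y) ∂(κ x)).toReal from funext h2]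
    exact h1.ennreal_toReal
  have hGnonneg : ∀ x, 0 ≤ G x := fun x => integral_nonneg hg0
  have hGbd : ∀ x, |G x| ≤ 2 * C := by
    intro x
    have := hκp x
    have hgint : Integrable g (κ x) := integrable_of_bdd hgmeas (2 * C) hgabs
    rw [abs_of_nonneg (hGnonneg x)]
    calc G x ≤ ∫ _ : β, 2 * C ∂(κ x) := integral_mono hgint (integrable_const _) hg2C
    _ = 2 * C := by simp
  have hGint : Integrable G m := integrable_of_bdd hGmeas (2 * C) hGbd
  -- key lintegral identity
  have hlkey : ∫⁻ y, ENNReal.ofReal (g y) ∂(m.bind κ)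
      = ∫⁻ x, ENNReal.ofReal (G x) ∂m := by
    rw [show (fun y => ENNReal.ofReal (g y)) = (ENNReal.ofReal ∘ g) from rfl,
      Measure.lintegral_bind hκ.aemeasurable (ENNReal.measurable_ofReal.comp hgmeas).aemeasurable]
    simp only [Function.comp]
    congr 1
    ext x
    have := hκp x
    have hgint : Integrable g (κ x) := integrable_of_bdd hgmeas (2 * C) hgabs
    rw [hGdef]
    exact (ofReal_integral_eq_lintegral_ofReal hgint (ae_of_all _ hg0)).symm
  have hLg : ∫ y, g y ∂(m.bind κ) = ∫ x, G x ∂m := by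
    rw [integral_eq_lintegral_of_nonneg_ae (ae_of_all _ hg0) hgmeas.aestronglyMeasurable, hlkey,
      ← ofReal_integral_eq_lintegral_ofReal hGint (ae_of_all _ hGnonneg),
      ENNReal.toReal_ofReal (integral_nonneg hGnonneg)]
  -- now subtract the constant
  have hfint : Integrable f (m.bind κ) := integrable_of_bdd hf C hbd
  have hLHS : ∫ y, g y ∂(m.bind κ) = (∫ y, f y ∂(m.bind κ)) + C := by
    rw [hgdef]
    rw [integral_add hfint (integrable_const C), integral_const]
    simp
  have hinner : ∀ x, (∫ y, f y ∂(κ x)) = G x - C := by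
    intro x
    have := hκp x
    have hfintx : Integrable f (κ x) := integrable_of_bdd hf C hbd
    rw [hGdef]
    simp only [hgdef]
    rw [integral_add hfintx (integrable_const C), integral_const]
    simp
  simp_rw [hinner]
  rw [integral_sub hGint (integrable_const C), integral_const]
  simp
  linarith [hLg, hLHS]


namespace IGL

variable {X Y : Type*} [MeasurableSpace X] [MeasurableSpace Y] {K : ℕ}

/-- A (stochastic) policy: for each context `x`, `π x` is a probability vector over actions. -/
def IsPolicy (K : ℕ) (π : X → Fin K → ℝ) : Prop :=
  (∀ a, Measurable fun x => π x a) ∧ (∀ x a, 0 ≤ π x a) ∧ ∀ x, ∑ a, π x a = 1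

/-- A reward decoder: a measurable function `ψ : Y → [0,1]`. -/
def IsDecoder (ψ : Y → ℝ) : Prop :=
  Measurable ψ ∧ ∀ y, ψ y ∈ Set.Icc (0 : ℝ) 1

/-- The uniform policy `π_u(a|x) = 1/K`. -/
def uniformPolicy (X : Type*) (K : ℕ) : X → Fin K → ℝ := fun _ _ => (K : ℝ)⁻¹

/-- The value `V(π) = E_{x ~ d0}[∑_a π(a|x) R(x,a)]` of a policy. -/
def polValue (d0 : Measure X) (R : X → Fin K → ℝ) (π : X → Fin K → ℝ) : ℝ :=
  ∫ x, ∑ a, π x a * R x a ∂d0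

/-- `Δψ = ∫ ψ dν1 - ∫ ψ dν0`. -/
def deltaPsi (ν1 ν0 : Measure Y) (ψ : Y → ℝ) : ℝ :=
  (∫ y, ψ y ∂ν1) - ∫ y, ψ y ∂ν0

/-- The decoded value `V(π,ψ) = E[ψ(y)]` under the IGL generative process: `x ~ d0`,
`a ~ π(·|x)`, `r ~ Bernoulli(R(x,a))`, `y ~ ν1` if `r = 1`, `y ~ ν0` if `r = 0`. -/
def decValue (d0 : Measure X) (R : X → Fin K → ℝ) (ν1 ν0 : Measure Y)
    (π : X → Fin K → ℝ) (ψ : Y → ℝ) : ℝ :=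
  ∫ x, ∑ a, π x a * (R x a * (∫ y, ψ y ∂ν1) + (1 - R x a) * ∫ y, ψ y ∂ν0) ∂d0

/-- Law of the feedback `y` given that the latent Bernoulli reward has mean `p`. -/
def feedback (ν1 ν0 : Measure Y) (p : ℝ) : Measure Y :=
  ENNReal.ofReal p • ν1 + ENNReal.ofReal (1 - p) • ν0

/-- Law of one sample `(x, a, y)`: `x ~ d0`, `a ~ q(·|x)`, and `y` drawn from the IGL
generative process (Assumption 1: `y ⟂ (x,a) | r`). -/
def sampleLaw (d0 : Measure X) (q : X → Fin K → ℝ) (R : X → Fin K → ℝ)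
    (ν1 ν0 : Measure Y) : Measure (X × Fin K × Y) :=
  d0.bind fun x => Measure.sum fun a : Fin K =>
    ENNReal.ofReal (q x a) • (feedback ν1 ν0 (R x a)).map fun y => (x, a, y)

/-- Law of a dataset of `n` i.i.d. samples. -/
def dataLaw (n : ℕ) (μ : Measure (X × Fin K × Y)) : Measure (Fin n → X × Fin K × Y) :=
  Measure.pi fun _ => μ

/-- The empirical estimator for uniform-policy data:
`V̂_D(π,ψ) = (1/n) ∑_i K·π(a_i|x_i)·ψ(y_i)`. -/
def VhatU (n : ℕ) (K : ℕ) (D : Fin n → X × Fin K × Y) (π : X → Fin K → ℝ) (ψ : Y → ℝ) : ℝ :=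
  (n : ℝ)⁻¹ * ∑ i, (K : ℝ) * π (D i).1 (D i).2.1 * ψ (D i).2.2

/-- The empirical estimator of the value of the uniform policy:
`V̂_D(π_u,ψ) = (1/n) ∑_i ψ(y_i)`. -/
def VhatU0 (n : ℕ) {K : ℕ} (D : Fin n → X × Fin K × Y) (ψ : Y → ℝ) : ℝ :=
  (n : ℝ)⁻¹ * ∑ i, ψ (D i).2.2

/-- `ι := log(2|Π||Ψ|/δ)`. -/
def iotaC (NPol NDec : ℕ) (δ : ℝ) : ℝ := Real.log (2 * NPol * NDec / δ)

/-- `ε_D := √(ι/(2n))`. -/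
def epsD (NPol NDec : ℕ) (δ : ℝ) (n : ℕ) : ℝ := Real.sqrt (iotaC NPol NDec δ / (2 * n))

section AuxIGL

variable (ν1 ν0 : Measure Y) [IsProbabilityMeasure ν1] [IsProbabilityMeasure ν0]

lemma feedback_prob {p : ℝ} (hp0 : 0 ≤ p) (hp1 : p ≤ 1) :
    IsProbabilityMeasure (feedback ν1 ν0 p) := by
  constructor
  simp only [feedback, Measure.add_apply, Measure.smul_apply, measure_univ, smul_eq_mul, mul_one]
  rw [← ENNReal.ofReal_add hp0 (by linarith : (0:ℝ) ≤ 1 - p)]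
  norm_num

lemma measurable_uncurry_fin {g : X → Fin K → ℝ} (hg : ∀ a, Measurable fun x => g x a) :
    Measurable fun p : X × Fin K => g p.1 p.2 := by
  classical
  have heq : (fun p : X × Fin K => g p.1 p.2)
      = fun p => ∑ a, if p.2 = a then g p.1 a else 0 := by
    ext p
    rw [Finset.sum_eq_single p.2]
    · simp
    · intro b _ hb
      simp [Ne.symm hb]
    · simp
  rw [heq]
  refine Finset.measurable_sum _ (fun a _ => ?_)
  exact Measurable.ite ((measurableSet_singleton a).preimage measurable_snd)
    ((hg a).comp measurable_fst) measurable_const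

lemma measurable_kern (q R : X → Fin K → ℝ) (hq : ∀ a, Measurable fun x => q x a)
    (hR : ∀ a, Measurable fun x => R x a) :
    Measurable fun x : X => Measure.sum fun a : Fin K =>
      ENNReal.ofReal (q x a) • (feedback ν1 ν0 (R x a)).map fun y => (x, a, y) := by
  apply Measure.measurable_of_measurable_coe
  intro s hs
  have key : ∀ (ν : Measure Y), IsProbabilityMeasure ν → ∀ a : Fin K,
      Measurable fun x : X => (ν.map fun y => (x, a, y)) s := by
    intro ν hν a
    set ρ : Measure (Fin K × Y) := ν.map fun y => (a, y) with hρ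
    haveI : IsProbabilityMeasure ρ :=
      Measure.isProbabilityMeasure_map (measurable_prodMk_left.aemeasurable)
    have heq : ∀ x : X, (ν.map fun y => (x, a, y)) s = ρ (Prod.mk x ⁻¹' s) := by
      intro x
      rw [hρ, Measure.map_apply measurable_prodMk_left (hs.preimage measurable_prodMk_left),
        Measure.map_apply (by measurability) hs]
      rfl
    rw [show (fun x : X => (ν.map fun y => (x, a, y)) s)
      = fun x => ρ (Prod.mk x ⁻¹' s) from funext heq]
    exact measurable_measure_prodMk_left hs
  have hfb : ∀ (x : X) (a : Fin K),
      ((feedback ν1 ν0 (R x a)).map fun y => (x, a, y)) s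
        = ENNReal.ofReal (R x a) * (ν1.map fun y => (x, a, y)) s
          + ENNReal.ofReal (1 - R x a) * (ν0.map fun y => (x, a, y)) s := by
    intro x a
    simp only [feedback]
    rw [Measure.map_add _ _ (by measurability), Measure.map_smul, Measure.map_smul]
    simp [Measure.add_apply, Measure.smul_apply, smul_eq_mul]
  simp only [Measure.sum_apply _ hs, Measure.smul_apply, smul_eq_mul, tsum_fintype]
  simp_rw [hfb]
  refine Finset.measurable_sum _ (fun a _ => Measurable.mul ?_ (Measurable.add ?_ ?_))
  · exact ENNReal.measurable_ofReal.comp (hq a)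
  · exact (ENNReal.measurable_ofReal.comp (hR a)).mul (key ν1 inferInstance a)
  · exact (ENNReal.measurable_ofReal.comp ((measurable_const.sub (hR a)))).mul
      (key ν0 inferInstance a)

lemma kern_prob (q R : X → Fin K → ℝ) (hq0 : ∀ x a, 0 ≤ q x a) (hqs : ∀ x, ∑ a, q x a = 1)
    (hR : ∀ x a, R x a ∈ Set.Icc (0:ℝ) 1) (x : X) :
    IsProbabilityMeasure (Measure.sum fun a : Fin K =>
      ENNReal.ofReal (q x a) • (feedback ν1 ν0 (R x a)).map fun y => (x, a, y)) := by
  constructor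
  rw [Measure.sum_apply _ MeasurableSet.univ]
  have hmap : ∀ a : Fin K,
      ((feedback ν1 ν0 (R x a)).map fun y => (x, a, y)) Set.univ = 1 := by
    intro a
    haveI := feedback_prob ν1 ν0 (hR x a).1 (hR x a).2
    haveI : IsProbabilityMeasure ((feedback ν1 ν0 (R x a)).map fun y => (x, a, y)) :=
      Measure.isProbabilityMeasure_map (by measurability)
    exact measure_univ
  simp only [Measure.smul_apply, smul_eq_mul, hmap, mul_one, tsum_fintype]
  rw [← ENNReal.ofReal_sum_of_nonneg (fun a _ => hq0 x a), hqs]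
  norm_num

lemma sampleLaw_prob (d0 : Measure X) [IsProbabilityMeasure d0] (q R : X → Fin K → ℝ)
    (hqm : ∀ a, Measurable fun x => q x a) (hRm : ∀ a, Measurable fun x => R x a)
    (hq0 : ∀ x a, 0 ≤ q x a) (hqs : ∀ x, ∑ a, q x a = 1)
    (hR : ∀ x a, R x a ∈ Set.Icc (0:ℝ) 1) :
    IsProbabilityMeasure (sampleLaw d0 q R ν1 ν0) :=
  isProbabilityMeasure_bind d0 _ (measurable_kern ν1 ν0 q R hqm hRm)
    (kern_prob ν1 ν0 q R hq0 hqs hR)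

lemma integral_sampleLaw (d0 : Measure X) [IsProbabilityMeasure d0] (q R : X → Fin K → ℝ)
    (hqm : ∀ a, Measurable fun x => q x a) (hRm : ∀ a, Measurable fun x => R x a)
    (hq0 : ∀ x a, 0 ≤ q x a) (hqs : ∀ x, ∑ a, q x a = 1)
    (hR : ∀ x a, R x a ∈ Set.Icc (0:ℝ) 1)
    (g : X → Fin K → ℝ) (hgm : ∀ a, Measurable fun x => g x a)
    (Cg : ℝ) (hgbd : ∀ x a, |g x a| ≤ Cg)
    (ψ : Y → ℝ) (hψ : IsDecoder ψ) :
    ∫ ω, g ω.1 ω.2.1 * ψ ω.2.2 ∂(sampleLaw d0 q R ν1 ν0)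
      = ∫ x, ∑ a, q x a * (g x a *
          (R x a * (∫ y, ψ y ∂ν1) + (1 - R x a) * ∫ y, ψ y ∂ν0)) ∂d0 := by
  obtain ⟨hψm, hψbd⟩ := hψ
  set f : X × Fin K × Y → ℝ := fun ω => g ω.1 ω.2.1 * ψ ω.2.2 with hf
  have hfm : Measurable f := by
    have h1 : Measurable fun ω : X × Fin K × Y => g ω.1 ω.2.1 :=
      (measurable_uncurry_fin hgm).comp (measurable_fst.prodMk
        (measurable_fst.comp measurable_snd))
    exact h1.mul (hψm.comp (measurable_snd.comp measurable_snd))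
  have hfbd : ∀ ω, |f ω| ≤ Cg := by
    intro ω
    have hval : f ω = g ω.1 ω.2.1 * ψ ω.2.2 := rfl
    rw [hval, abs_mul]
    have h1 : |ψ ω.2.2| ≤ 1 := by rw [abs_of_nonneg (hψbd _).1]; exact (hψbd _).2
    have h2 : (0:ℝ) ≤ Cg := le_trans (abs_nonneg _) (hgbd ω.1 ω.2.1)
    calc |g ω.1 ω.2.1| * |ψ ω.2.2| ≤ Cg * 1 :=
        mul_le_mul (hgbd _ _) h1 (abs_nonneg _) h2
    _ = Cg := mul_one Cg
  have hκm := measurable_kern ν1 ν0 q R hqm hRm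
  have hκp := kern_prob ν1 ν0 q R hq0 hqs hR
  rw [show sampleLaw d0 q R ν1 ν0 = d0.bind (fun x => Measure.sum fun a : Fin K =>
    ENNReal.ofReal (q x a) • (feedback ν1 ν0 (R x a)).map fun y => (x, a, y)) from rfl]
  rw [integral_bind_of_bdd d0 _ hκm hκp f hfm Cg hfbd]
  congr 1
  ext x
  haveI := hκp x
  have hfint : Integrable f (Measure.sum fun a : Fin K =>
      ENNReal.ofReal (q x a) • (feedback ν1 ν0 (R x a)).map fun y => (x, a, y)) :=
    integrable_of_bdd hfm Cg hfbd
  rw [integral_sum_measure hfint, tsum_fintype]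
  refine Finset.sum_congr rfl (fun a _ => ?_)
  haveI hfbp := feedback_prob ν1 ν0 (hR x a).1 (hR x a).2
  rw [integral_smul_measure, integral_map (by measurability) hfm.aestronglyMeasurable]
  simp only [smul_eq_mul, ENNReal.toReal_ofReal (hq0 x a)]
  congr 1
  have hψint1 : Integrable ψ ν1 := integrable_of_bdd hψm 1
    (fun y => by rw [abs_of_nonneg (hψbd y).1]; exact (hψbd y).2)
  have hψint0 : Integrable ψ ν0 := integrable_of_bdd hψm 1
    (fun y => by rw [abs_of_nonneg (hψbd y).1]; exact (hψbd y).2)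
  have hfeed : ∫ y, ψ y ∂(feedback ν1 ν0 (R x a))
      = R x a * (∫ y, ψ y ∂ν1) + (1 - R x a) * ∫ y, ψ y ∂ν0 := by
    rw [show feedback ν1 ν0 (R x a) = ENNReal.ofReal (R x a) • ν1
        + ENNReal.ofReal (1 - R x a) • ν0 from rfl]
    rw [integral_add_measure (hψint1.smul_measure ENNReal.ofReal_ne_top)
      (hψint0.smul_measure ENNReal.ofReal_ne_top)]
    rw [integral_smul_measure, integral_smul_measure,
      ENNReal.toReal_ofReal (hR x a).1, ENNReal.toReal_ofReal (by linarith [(hR x a).2])]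
    simp [smul_eq_mul]
  calc ∫ y, f (x, a, y) ∂(feedback ν1 ν0 (R x a))
      = ∫ y, g x a * ψ y ∂(feedback ν1 ν0 (R x a)) := rfl
    _ = g x a * ∫ y, ψ y ∂(feedback ν1 ν0 (R x a)) := integral_const_mul _ _
    _ = g x a * (R x a * (∫ y, ψ y ∂ν1) + (1 - R x a) * ∫ y, ψ y ∂ν0) := by rw [hfeed]

end AuxIGL


section AuxIGL2

variable (ν1 ν0 : Measure Y) [IsProbabilityMeasure ν1] [IsProbabilityMeasure ν0]

lemma isPolicy_le_one {π : X → Fin K → ℝ} (hπ : IsPolicy K π) : ∀ x a, π x a ≤ 1 := by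
  intro x a
  have h := hπ.2.2 x
  have := Finset.single_le_sum (f := fun a => π x a) (fun b _ => hπ.2.1 x b)
    (Finset.mem_univ a)
  linarith

lemma uniform_isPolicy (hK : 0 < K) : IsPolicy K (uniformPolicy X K) := by
  refine ⟨fun a => measurable_const, fun x a => inv_nonneg.mpr (Nat.cast_nonneg K), fun x => ?_⟩
  simp [uniformPolicy, Finset.sum_const, Finset.card_univ]
  rw [mul_inv_cancel₀]
  exact_mod_cast hK.ne'

lemma polValue_mem (d0 : Measure X) [IsProbabilityMeasure d0] (R : X → Fin K → ℝ)
    (hRm : ∀ a, Measurable fun x => R x a) (hR : ∀ x a, R x a ∈ Set.Icc (0:ℝ) 1)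
    (π : X → Fin K → ℝ) (hπ : IsPolicy K π) : polValue d0 R π ∈ Set.Icc (0:ℝ) 1 := by
  have hm : Measurable fun x => ∑ a, π x a * R x a :=
    Finset.measurable_sum _ (fun a _ => (hπ.1 a).mul (hRm a))
  have hpt : ∀ x, (∑ a, π x a * R x a) ∈ Set.Icc (0:ℝ) 1 := by
    intro x
    constructor
    · exact Finset.sum_nonneg (fun a _ => mul_nonneg (hπ.2.1 x a) (hR x a).1)
    · calc ∑ a, π x a * R x a ≤ ∑ a, π x a :=
          Finset.sum_le_sum (fun a _ => mul_le_of_le_one_right (hπ.2.1 x a) (hR x a).2)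
      _ = 1 := hπ.2.2 x
  have hint : Integrable (fun x => ∑ a, π x a * R x a) d0 :=
    integrable_of_bdd hm 1 (fun x => abs_le.mpr ⟨by linarith [(hpt x).1], (hpt x).2⟩)
  constructor
  · exact integral_nonneg (fun x => (hpt x).1)
  · calc ∫ x, ∑ a, π x a * R x a ∂d0 ≤ ∫ _ : X, (1:ℝ) ∂d0 :=
        integral_mono hint (integrable_const 1) (fun x => (hpt x).2)
    _ = 1 := by simp

lemma deltaPsi_mem (ψ : Y → ℝ) (hψ : IsDecoder ψ) :
    deltaPsi ν1 ν0 ψ ∈ Set.Icc (-1:ℝ) 1 := by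
  obtain ⟨hm, hbd⟩ := hψ
  have key : ∀ (ν : Measure Y), IsProbabilityMeasure ν → (∫ y, ψ y ∂ν) ∈ Set.Icc (0:ℝ) 1 := by
    intro ν hν
    have hint : Integrable ψ ν := integrable_of_bdd hm 1
      (fun y => abs_le.mpr ⟨by linarith [(hbd y).1], (hbd y).2⟩)
    constructor
    · exact integral_nonneg (fun y => (hbd y).1)
    · calc ∫ y, ψ y ∂ν ≤ ∫ _ : Y, (1:ℝ) ∂ν :=
          integral_mono hint (integrable_const 1) (fun y => (hbd y).2)
      _ = 1 := by simp
  have h1 := key ν1 inferInstance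
  have h0 := key ν0 inferInstance
  exact ⟨by simp only [deltaPsi]; linarith [h1.1, h0.2], by
    simp only [deltaPsi]; linarith [h1.2, h0.1]⟩

lemma mean_Z (d0 : Measure X) [IsProbabilityMeasure d0] (hK : 0 < K)
    (R : X → Fin K → ℝ) (hRm : ∀ a, Measurable fun x => R x a)
    (hR : ∀ x a, R x a ∈ Set.Icc (0:ℝ) 1)
    (π : X → Fin K → ℝ) (hπ : IsPolicy K π) (ψ : Y → ℝ) (hψ : IsDecoder ψ) :
    ∫ ω, ((K:ℝ) * π ω.1 ω.2.1 - 1) * ψ ω.2.2 ∂(sampleLaw d0 (uniformPolicy X K) R ν1 ν0)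
      = (polValue d0 R π - polValue d0 R (uniformPolicy X K)) * deltaPsi ν1 ν0 ψ := by
  have hKR : (0:ℝ) < K := by exact_mod_cast hK
  have hKR1 : (1:ℝ) ≤ K := by exact_mod_cast hK
  have hu := uniform_isPolicy (X := X) hK
  set I1 : ℝ := ∫ y, ψ y ∂ν1 with hI1
  set I0 : ℝ := ∫ y, ψ y ∂ν0 with hI0
  have hπ1 := isPolicy_le_one hπ
  have hgbd : ∀ x a, |(K:ℝ) * π x a - 1| ≤ K := by
    intro x a
    have h0 := hπ.2.1 x a
    have h1 := hπ1 x a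
    rw [abs_le]
    constructor <;> nlinarith
  rw [integral_sampleLaw ν1 ν0 d0 (uniformPolicy X K) R hu.1 hRm hu.2.1 hu.2.2 hR
    (fun x a => (K:ℝ) * π x a - 1) (fun a => ((hπ.1 a).const_mul _).sub_const 1) K hgbd ψ hψ]
  have hpt : ∀ x, ∑ a, uniformPolicy X K x a * (((K:ℝ) * π x a - 1) *
        (R x a * I1 + (1 - R x a) * I0))
      = ((∑ a, π x a * R x a) - ∑ a, uniformPolicy X K x a * R x a) * (I1 - I0) := by
    intro x
    have hterm : ∀ a : Fin K, uniformPolicy X K x a * (((K:ℝ) * π x a - 1) *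
          (R x a * I1 + (1 - R x a) * I0))
        = (π x a * R x a - (K:ℝ)⁻¹ * R x a) * (I1 - I0) + (π x a - (K:ℝ)⁻¹) * I0 := by
      intro a
      simp only [uniformPolicy]
      field_simp
      ring
    rw [Finset.sum_congr rfl (fun a _ => hterm a), Finset.sum_add_distrib]
    have hzero : ∑ a : Fin K, (π x a - (K:ℝ)⁻¹) * I0 = 0 := by
      rw [← Finset.sum_mul, Finset.sum_sub_distrib, hπ.2.2 x, Finset.sum_const,
        Finset.card_univ, Fintype.card_fin, nsmul_eq_mul, mul_inv_cancel₀ hKR.ne']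
      ring
    rw [hzero, add_zero, ← Finset.sum_mul, Finset.sum_sub_distrib]
    have huni : ∑ a : Fin K, (K:ℝ)⁻¹ * R x a = ∑ a, uniformPolicy X K x a * R x a :=
      Finset.sum_congr rfl (fun a _ => rfl)
    rw [huni]
  rw [integral_congr_ae (ae_of_all _ hpt)]
  have hm1 : Measurable fun x => ∑ a, π x a * R x a :=
    Finset.measurable_sum _ (fun a _ => (hπ.1 a).mul (hRm a))
  have hm2 : Measurable fun x => ∑ a, uniformPolicy X K x a * R x a :=
    Finset.measurable_sum _ (fun a _ => (measurable_const.mul (hRm a)))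
  have hb1 : ∀ x, (∑ a, π x a * R x a) ∈ Set.Icc (0:ℝ) 1 := by
    intro x
    constructor
    · exact Finset.sum_nonneg (fun a _ => mul_nonneg (hπ.2.1 x a) (hR x a).1)
    · calc ∑ a, π x a * R x a ≤ ∑ a, π x a :=
          Finset.sum_le_sum (fun a _ => mul_le_of_le_one_right (hπ.2.1 x a) (hR x a).2)
      _ = 1 := hπ.2.2 x
  have hb2 : ∀ x, (∑ a, uniformPolicy X K x a * R x a) ∈ Set.Icc (0:ℝ) 1 := by
    intro x
    constructor
    · exact Finset.sum_nonneg (fun a _ => mul_nonneg (hu.2.1 x a) (hR x a).1)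
    · calc ∑ a, uniformPolicy X K x a * R x a ≤ ∑ a, uniformPolicy X K x a :=
          Finset.sum_le_sum (fun a _ => mul_le_of_le_one_right (hu.2.1 x a) (hR x a).2)
      _ = 1 := hu.2.2 x
  have hint1 : Integrable (fun x => ∑ a, π x a * R x a) d0 :=
    integrable_of_bdd hm1 1 (fun x => abs_le.mpr ⟨by linarith [(hb1 x).1], (hb1 x).2⟩)
  have hint2 : Integrable (fun x => ∑ a, uniformPolicy X K x a * R x a) d0 :=
    integrable_of_bdd hm2 1 (fun x => abs_le.mpr ⟨by linarith [(hb2 x).1], (hb2 x).2⟩)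
  rw [integral_mul_const, integral_sub hint1 hint2]
  rfl

end AuxIGL2


set_option maxHeartbeats 1000000 in
/-- **Lemma 3.** With probability at least `1 − δ` over the draw of the
dataset `D` of `n` i.i.d. triples collected with the uniform policy, the following holds:
if the empirical maximizer `(π̂, ψ̂)` satisfies
`V̂_D(π̂,ψ̂) − V̂_D(π_u,ψ̂) > V(π_u) + K·ε_D`, then `Δψ̂ > 0` and
`V(π̂) ≥ V(π⋆) − 2K·ε_D / Δψ⋆`. -/
theorem igl_lemma3_exploitation_guarantee
    (hK : 0 < K)
    (d0 : Measure X) [IsProbabilityMeasure d0]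
    (ν1 ν0 : Measure Y) [IsProbabilityMeasure ν1] [IsProbabilityMeasure ν0]
    (R : X → Fin K → ℝ) (hRmeas : ∀ a, Measurable fun x => R x a)
    (hR : ∀ x a, R x a ∈ Set.Icc (0 : ℝ) 1)
    {ιPol ιDec : Type*} [Fintype ιPol] [Fintype ιDec] [Nonempty ιPol] [Nonempty ιDec]
    (P : ιPol → X → Fin K → ℝ) (hP : ∀ i, IsPolicy K (P i))
    (Ψc : ιDec → Y → ℝ) (hΨ : ∀ j, IsDecoder (Ψc j))
    -- `π⋆` and `ψ⋆`
    (istar : ιPol) (histar : ∀ i, polValue d0 R (P i) ≤ polValue d0 R (P istar))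
    (jstar : ιDec) (hjstar : ∀ j, deltaPsi ν1 ν0 (Ψc j) ≤ deltaPsi ν1 ν0 (Ψc jstar))
    (n : ℕ) (hn : 0 < n) (δ : ℝ) (hδ : 0 < δ) (hδ1 : δ < 1) :
    ENNReal.ofReal (1 - δ) ≤
      dataLaw n (sampleLaw d0 (uniformPolicy X K) R ν1 ν0)
        {D | ∀ (ihat : ιPol) (jhat : ιDec),
          (∀ (i : ιPol) (j : ιDec),
            VhatU n K D (P i) (Ψc j) - VhatU0 n D (Ψc j)
              ≤ VhatU n K D (P ihat) (Ψc jhat) - VhatU0 n D (Ψc jhat)) →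
          VhatU n K D (P ihat) (Ψc jhat) - VhatU0 n D (Ψc jhat)
              > polValue d0 R (uniformPolicy X K)
                + K * epsD (Fintype.card ιPol) (Fintype.card ιDec) δ n →
          0 < deltaPsi ν1 ν0 (Ψc jhat) ∧
            polValue d0 R (P ihat)
              ≥ polValue d0 R (P istar)
                - 2 * K * epsD (Fintype.card ιPol) (Fintype.card ιDec) δ n
                    / deltaPsi ν1 ν0 (Ψc jstar)} := by
  classical
  have hKR : (0:ℝ) < K := by exact_mod_cast hK
  have hK1 : (1:ℝ) ≤ K := by exact_mod_cast hK
  have hn' : (0:ℝ) < n := by exact_mod_cast hn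
  set NP := Fintype.card ιPol with hNPdef
  set ND := Fintype.card ιDec with hNDdef
  have hNP : 0 < NP := Fintype.card_pos
  have hND : 0 < ND := Fintype.card_pos
  have hNPR : (0:ℝ) < NP := by exact_mod_cast hNP
  have hNDR : (0:ℝ) < ND := by exact_mod_cast hND
  set ε : ℝ := epsD NP ND δ n with hεdef
  set ιc : ℝ := iotaC NP ND δ with hιdef
  have h1NP : (1:ℝ) ≤ NP := by exact_mod_cast hNP
  have h1ND : (1:ℝ) ≤ ND := by exact_mod_cast hND
  have hprod1 : (1:ℝ) ≤ (NP:ℝ) * ND := by nlinarith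
  have hratio : (1:ℝ) < 2 * NP * ND / δ := by
    rw [lt_div_iff₀ hδ]
    nlinarith
  have hι0 : 0 < ιc := Real.log_pos hratio
  have hε0 : 0 < ε := Real.sqrt_pos.mpr (by positivity)
  have hε2 : ε ^ 2 = ιc / (2 * n) := Real.sq_sqrt (by positivity)
  -- the per-event tail probability
  have hexpo : -2 * (n:ℝ) * ((K:ℝ) * ε) ^ 2 / ((K:ℝ)) ^ 2 = -(2 * n * ε ^ 2) := by
    field_simp
  have hval : Real.exp (-(2 * (n:ℝ) * ε ^ 2)) = δ / (2 * NP * ND) := by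
    have h2n : 2 * (n:ℝ) * ε ^ 2 = ιc := by
      rw [hε2]; field_simp
    rw [h2n, Real.exp_neg, hιdef, iotaC,
      Real.exp_log (by nlinarith [mul_pos hNPR hNDR] : (0:ℝ) < 2 * NP * ND / δ), inv_div]
  -- the sampling measure
  set μ1 : Measure (X × Fin K × Y) := sampleLaw d0 (uniformPolicy X K) R ν1 ν0 with hμ1
  have hu := uniform_isPolicy (X := X) hK
  haveI hμ1p : IsProbabilityMeasure μ1 :=
    sampleLaw_prob ν1 ν0 d0 (uniformPolicy X K) R hu.1 hRmeas hu.2.1 hu.2.2 hR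
  haveI hdlp : IsProbabilityMeasure (dataLaw n μ1) :=
    inferInstanceAs (IsProbabilityMeasure (Measure.pi fun _ : Fin n => μ1))
  -- the centered variables
  set Zf : ιPol → ιDec → X × Fin K × Y → ℝ :=
    fun i j ω => ((K:ℝ) * P i ω.1 ω.2.1 - 1) * Ψc j ω.2.2 with hZf
  have hZm : ∀ i j, Measurable (Zf i j) := by
    intro i j
    have h1 : Measurable fun ω : X × Fin K × Y => P i ω.1 ω.2.1 :=
      (measurable_uncurry_fin (hP i).1).comp
        (measurable_fst.prodMk (measurable_fst.comp measurable_snd))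
    exact ((h1.const_mul _).sub_const 1).mul ((hΨ j).1.comp (measurable_snd.comp measurable_snd))
  have hZbd : ∀ i j ω, Zf i j ω ∈ Set.Icc (-1 : ℝ) ((K:ℝ) - 1) := by
    intro i j ω
    have hp0 := (hP i).2.1 ω.1 ω.2.1
    have hp1 := isPolicy_le_one (hP i) ω.1 ω.2.1
    have hs0 := ((hΨ j).2 ω.2.2).1
    have hs1 := ((hΨ j).2 ω.2.2).2
    constructor
    · have h1 : (0:ℝ) ≤ (1 + ((K:ℝ) * P i ω.1 ω.2.1 - 1)) * Ψc j ω.2.2 :=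
        mul_nonneg (by nlinarith) hs0
      simp only [hZf]
      nlinarith
    · have h2 : (0:ℝ) ≤ ((K:ℝ) - 1 - ((K:ℝ) * P i ω.1 ω.2.1 - 1)) * Ψc j ω.2.2 :=
        mul_nonneg (by nlinarith) hs0
      have h3 : (0:ℝ) ≤ ((K:ℝ) - 1) * (1 - Ψc j ω.2.2) :=
        mul_nonneg (by linarith) (by linarith)
      simp only [hZf]
      nlinarith
  have hmean : ∀ i j, ∫ ω, Zf i j ω ∂μ1
      = (polValue d0 R (P i) - polValue d0 R (uniformPolicy X K)) * deltaPsi ν1 ν0 (Ψc j) :=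
    fun i j => mean_Z ν1 ν0 d0 hK R hRmeas hR (P i) (hP i) (Ψc j) (hΨ j)
  -- bad events
  set E1 : ιPol → ιDec → Set (Fin n → X × Fin K × Y) := fun i j =>
    {D | (∫ ω, Zf i j ω ∂μ1) + (K:ℝ) * ε ≤ (n:ℝ)⁻¹ * ∑ k, Zf i j (D k)} with hE1def
  set E2 : ιPol → ιDec → Set (Fin n → X × Fin K × Y) := fun i j =>
    {D | (n:ℝ)⁻¹ * ∑ k, Zf i j (D k) ≤ (∫ ω, Zf i j ω ∂μ1) - (K:ℝ) * ε} with hE2def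
  have hKlt : (-1:ℝ) < (K:ℝ) - 1 := by linarith
  have htail : ENNReal.ofReal (Real.exp (-2 * ↑n * ((K:ℝ) * ε) ^ 2 / (((K:ℝ) - 1) - (-1)) ^ 2))
      = ENNReal.ofReal (δ / (2 * NP * ND)) := by
    congr 1
    rw [show ((K:ℝ) - 1) - (-1) = (K:ℝ) by ring, hexpo, hval]
  have hE1bd : ∀ i j, dataLaw n μ1 (E1 i j) ≤ ENNReal.ofReal (δ / (2 * NP * ND)) := by
    intro i j
    have := hoeff_tail_upper μ1 (Zf i j) (hZm i j) (-1) ((K:ℝ) - 1) hKlt (hZbd i j) n hn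
      ((K:ℝ) * ε) (by positivity)
    rw [htail] at this
    exact this
  have hE2bd : ∀ i j, dataLaw n μ1 (E2 i j) ≤ ENNReal.ofReal (δ / (2 * NP * ND)) := by
    intro i j
    have := hoeff_tail_lower μ1 (Zf i j) (hZm i j) (-1) ((K:ℝ) - 1) hKlt (hZbd i j) n hn
      ((K:ℝ) * ε) (by positivity)
    rw [htail] at this
    exact this
  set Bad : Set (Fin n → X × Fin K × Y) := ⋃ i, ⋃ j, (E1 i j ∪ E2 i j) with hBaddef
  have hBad : dataLaw n μ1 Bad ≤ ENNReal.ofReal δ := by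
    have hc : ENNReal.ofReal (δ / (2 * NP * ND)) + ENNReal.ofReal (δ / (2 * NP * ND))
        = ENNReal.ofReal (δ / (NP * ND)) := by
      rw [← ENNReal.ofReal_add (by positivity) (by positivity)]
      congr 1
      field_simp
      ring
    calc dataLaw n μ1 Bad ≤ ∑' i : ιPol, dataLaw n μ1 (⋃ j, (E1 i j ∪ E2 i j)) :=
          measure_iUnion_le _
      _ ≤ ∑' i : ιPol, ∑' j : ιDec, dataLaw n μ1 (E1 i j ∪ E2 i j) :=
          ENNReal.tsum_le_tsum (fun i => measure_iUnion_le _)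
      _ ≤ ∑' _i : ιPol, ∑' _j : ιDec, ENNReal.ofReal (δ / (NP * ND)) := by
          refine ENNReal.tsum_le_tsum (fun i => ENNReal.tsum_le_tsum (fun j => ?_))
          calc dataLaw n μ1 (E1 i j ∪ E2 i j)
              ≤ dataLaw n μ1 (E1 i j) + dataLaw n μ1 (E2 i j) := measure_union_le _ _
            _ ≤ ENNReal.ofReal (δ / (2 * NP * ND)) + ENNReal.ofReal (δ / (2 * NP * ND)) :=
                add_le_add (hE1bd i j) (hE2bd i j)
            _ = ENNReal.ofReal (δ / (NP * ND)) := hc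
      _ = ENNReal.ofReal δ := by
          rw [tsum_fintype]
          simp_rw [tsum_fintype]
          rw [Finset.sum_const, Finset.sum_const, Finset.card_univ, Finset.card_univ,
            ← hNPdef, ← hNDdef, smul_smul, nsmul_eq_mul]
          rw [← ENNReal.ofReal_natCast (NP * ND), ← ENNReal.ofReal_mul (by positivity)]
          congr 1
          push_cast
          field_simp
  -- good event has probability ≥ 1 - δ
  have hGood : ENNReal.ofReal (1 - δ) ≤ dataLaw n μ1 Badᶜ := by
    have h1 : (1:ℝ≥0∞) ≤ dataLaw n μ1 Badᶜ + dataLaw n μ1 Bad := by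
      calc (1:ℝ≥0∞) = dataLaw n μ1 Set.univ := measure_univ.symm
        _ = dataLaw n μ1 (Badᶜ ∪ Bad) := by rw [Set.compl_union_self]
        _ ≤ dataLaw n μ1 Badᶜ + dataLaw n μ1 Bad := measure_union_le _ _
    have h2 : ENNReal.ofReal (1 - δ) + ENNReal.ofReal δ
        ≤ dataLaw n μ1 Badᶜ + ENNReal.ofReal δ := by
      rw [← ENNReal.ofReal_add (by linarith) hδ.le]
      simp only [sub_add_cancel]
      calc ENNReal.ofReal 1 = 1 := by norm_num
        _ ≤ dataLaw n μ1 Badᶜ + dataLaw n μ1 Bad := h1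
        _ ≤ dataLaw n μ1 Badᶜ + ENNReal.ofReal δ := add_le_add le_rfl hBad
    exact ENNReal.le_of_add_le_add_right ENNReal.ofReal_ne_top h2
  -- the good event implies the conclusion
  refine le_trans hGood (measure_mono ?_)
  intro D hD ihat jhat h1 h2
  simp only [hBaddef, hE1def, hE2def, Set.mem_compl_iff, Set.mem_iUnion, Set.mem_union,
    not_exists, not_or, Set.mem_setOf_eq] at hD
  have hWeq : ∀ (i : ιPol) (j : ιDec),
      VhatU n K D (P i) (Ψc j) - VhatU0 n D (Ψc j) = (n:ℝ)⁻¹ * ∑ k, Zf i j (D k) := by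
    intro i j
    rw [VhatU, VhatU0, ← mul_sub, ← Finset.sum_sub_distrib]
    congr 1
    exact Finset.sum_congr rfl (fun k _ => by simp only [hZf]; ring)
  set Vi : ℝ := polValue d0 R (P ihat) with hVidef
  set Vs : ℝ := polValue d0 R (P istar) with hVsdef
  set Vu : ℝ := polValue d0 R (uniformPolicy X K) with hVudef
  set dh : ℝ := deltaPsi ν1 ν0 (Ψc jhat) with hdhdef
  set ds : ℝ := deltaPsi ν1 ν0 (Ψc jstar) with hdsdef
  have hVi01 := polValue_mem d0 R hRmeas hR (P ihat) (hP ihat)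
  have hVs01 := polValue_mem d0 R hRmeas hR (P istar) (hP istar)
  have hVu01 := polValue_mem d0 R hRmeas hR (uniformPolicy X K) hu
  have hdh11 := deltaPsi_mem ν1 ν0 (Ψc jhat) (hΨ jhat)
  have hds11 := deltaPsi_mem ν1 ν0 (Ψc jstar) (hΨ jstar)
  -- deviation bounds from the good event
  have hub : (n:ℝ)⁻¹ * ∑ k, Zf ihat jhat (D k)
      < (Vi - Vu) * dh + (K:ℝ) * ε := by
    have := (hD ihat jhat).1
    rw [hmean ihat jhat] at this
    exact lt_of_not_ge (fun hcon => this (by linarith))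
  have hlb : (Vs - Vu) * ds - (K:ℝ) * ε < (n:ℝ)⁻¹ * ∑ k, Zf istar jstar (D k) := by
    have := (hD istar jstar).2
    rw [hmean istar jstar] at this
    exact lt_of_not_ge (fun hcon => this (by linarith))
  rw [hWeq ihat jhat] at h2
  have h1' := h1 istar jstar
  rw [hWeq istar jstar, hWeq ihat jhat] at h1'
  -- key inequalities
  have key1 : Vu < (Vi - Vu) * dh := by linarith [hub, h2]
  have hdh_pos : 0 < dh := by
    by_contra hcon
    push_neg at hcon
    nlinarith [mul_nonneg hVu01.1 (by linarith [hdh11.1] : (0:ℝ) ≤ 1 + dh),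
      mul_nonneg hVi01.1 (by linarith : (0:ℝ) ≤ -dh), hVu01.1]
  have hds_pos : 0 < ds := lt_of_lt_of_le hdh_pos (hjstar jhat)
  refine ⟨hdh_pos, ?_⟩
  have key2 : (Vs - Vu) * ds - 2 * ((K:ℝ) * ε) ≤ (Vi - Vu) * dh := by
    linarith [hlb, h1', hub]
  have hv_pos : 0 < Vi - Vu := by
    by_contra hcon
    push_neg at hcon
    have hle : (Vi - Vu) * dh ≤ 0 * dh := mul_le_mul_of_nonneg_right hcon hdh_pos.le
    rw [zero_mul] at hle
    linarith [key1, hVu01.1]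
  have key3 : (Vi - Vu) * dh ≤ (Vi - Vu) * ds :=
    mul_le_mul_of_nonneg_left (hjstar jhat) hv_pos.le
  have hfin : (Vs - Vi) * ds ≤ 2 * ((K:ℝ) * ε) := by nlinarith [key2, key3]
  have hdiv : Vs - Vi ≤ 2 * (K:ℝ) * ε / ds := by
    rw [le_div_iff₀ hds_pos]
    nlinarith [hfin]
  rw [ge_iff_le]
  linarith [hdiv]


end IGL
end
end

section
/- (Failure of identifiability for K = 2.) In the IGL model, the uniform policy satisfies V(π_u) ≥ V(π)/K for every policy π. Consequently, when K = 2, for every policy π and every decoder ψ one has (V(π) − V(π_u))·Δψ ≤ V(π_u); hence the identifiability Assumption 2, which requires (V(π⋆) − V(π_u))·Δψ⋆ ≥ V(π_u) + η for some η > 0, cannot hold for any η > 0 when K = 2. -/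
open MeasureTheory ENNReal Finset

noncomputable section

namespace IGL

variable {X Y : Type*} [MeasurableSpace X] [MeasurableSpace Y] {K : ℕ}

/-- **failure of identifiability for K = 2.** In the IGL model, the uniform
policy satisfies `V(π_u) ≥ V(π)/K` for every policy `π`. Consequently, when `K = 2`, for
every policy `π` and every decoder `ψ` one has `(V(π) − V(π_u))·Δψ ≤ V(π_u)`; hence the
identifiability Assumption 2, requiring `(V(π⋆) − V(π_u))·Δψ⋆ ≥ V(π_u) + η` for some
`η > 0`, cannot hold when `K = 2`. -/
theorem igl_identifiability_fails_for_two_actions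
    (hK : 0 < K)
    (d0 : Measure X) [IsProbabilityMeasure d0]
    (ν1 ν0 : Measure Y) [IsProbabilityMeasure ν1] [IsProbabilityMeasure ν0]
    (R : X → Fin K → ℝ) (hRmeas : ∀ a, Measurable fun x => R x a)
    (hR : ∀ x a, R x a ∈ Set.Icc (0 : ℝ) 1) :
    (∀ π : X → Fin K → ℝ, IsPolicy K π →
        polValue d0 R π / K ≤ polValue d0 R (uniformPolicy X K))
      ∧ (K = 2 →
          (∀ (π : X → Fin K → ℝ) (ψ : Y → ℝ), IsPolicy K π → IsDecoder ψ →
            (polValue d0 R π - polValue d0 R (uniformPolicy X K)) * deltaPsi ν1 ν0 ψ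
              ≤ polValue d0 R (uniformPolicy X K))
          ∧ ∀ η : ℝ, 0 < η →
              ∀ (πstar : X → Fin K → ℝ) (ψstar : Y → ℝ),
                IsPolicy K πstar → IsDecoder ψstar →
                ¬(polValue d0 R (uniformPolicy X K) + η
                    ≤ (polValue d0 R πstar - polValue d0 R (uniformPolicy X K))
                        * deltaPsi ν1 ν0 ψstar)) := by
  have hKR : (0:ℝ) < K := by exact_mod_cast hK
  have hunif : IsPolicy K (uniformPolicy X K) := by
    refine ⟨fun a => measurable_const, fun x a => inv_nonneg.2 (Nat.cast_nonneg K), fun x => ?_⟩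
    simp only [uniformPolicy, Finset.sum_const, Finset.card_univ, Fintype.card_fin, nsmul_eq_mul]
    field_simp
  have hint : ∀ (π : X → Fin K → ℝ), IsPolicy K π →
      Integrable (fun x => ∑ a, π x a * R x a) d0 := by
    rintro π ⟨hm, hnn, hs⟩
    apply Integrable.mono' (integrable_const (1:ℝ))
    · exact (Finset.measurable_sum _ fun a _ => (hm a).mul (hRmeas a)).aestronglyMeasurable
    · filter_upwards with x
      rw [Real.norm_eq_abs, abs_of_nonneg (Finset.sum_nonneg fun a _ =>
        mul_nonneg (hnn x a) (hR x a).1)]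
      calc ∑ a, π x a * R x a ≤ ∑ a, π x a * 1 :=
            Finset.sum_le_sum fun a _ => mul_le_mul_of_nonneg_left (hR x a).2 (hnn x a)
        _ = 1 := by simp [hs x]
  have hVnn : ∀ π, IsPolicy K π → 0 ≤ polValue d0 R π := by
    rintro π ⟨hm, hnn, hs⟩
    exact integral_nonneg fun x => Finset.sum_nonneg fun a _ =>
      mul_nonneg (hnn x a) (hR x a).1
  have hmain : ∀ π, IsPolicy K π →
      polValue d0 R π ≤ K * polValue d0 R (uniformPolicy X K) := by
    rintro π hπ
    obtain ⟨hm, hnn, hs⟩ := hπ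
    have h1 : polValue d0 R π ≤ ∫ x, (K:ℝ) * ∑ a, uniformPolicy X K x a * R x a ∂d0 := by
      apply integral_mono (hint π ⟨hm, hnn, hs⟩) ((hint _ hunif).const_mul _)
      intro x
      dsimp only
      rw [Finset.mul_sum]
      apply Finset.sum_le_sum
      intro a _
      have hπle : π x a ≤ 1 := by
        calc π x a ≤ ∑ b, π x b := Finset.single_le_sum (fun b _ => hnn x b) (Finset.mem_univ a)
          _ = 1 := hs x
      have : (K:ℝ) * (uniformPolicy X K x a * R x a) = R x a := by
        simp only [uniformPolicy]; field_simp
      rw [this]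
      calc π x a * R x a ≤ 1 * R x a :=
            mul_le_mul_of_nonneg_right hπle (hR x a).1
        _ = R x a := one_mul _
    rwa [integral_const_mul] at h1
  refine ⟨fun π hπ => (div_le_iff₀ hKR).2 (by rw [mul_comm]; exact hmain π hπ), fun hK2 => ?_⟩
  have hdelta : ∀ ψ : Y → ℝ, IsDecoder ψ → |deltaPsi ν1 ν0 ψ| ≤ 1 := by
    rintro ψ ⟨hm, hb⟩
    have hbnd : ∀ (ν : Measure Y), IsProbabilityMeasure ν → (∫ y, ψ y ∂ν) ∈ Set.Icc (0:ℝ) 1 := by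
      intro ν hν
      have hintψ : Integrable ψ ν := by
        apply Integrable.mono' (integrable_const (1:ℝ)) hm.aestronglyMeasurable
        filter_upwards with y
        rw [Real.norm_eq_abs, abs_of_nonneg (hb y).1]; exact (hb y).2
      constructor
      · exact integral_nonneg fun y => (hb y).1
      · calc (∫ y, ψ y ∂ν) ≤ ∫ _, (1:ℝ) ∂ν :=
              integral_mono hintψ (integrable_const 1) fun y => (hb y).2
          _ = 1 := by simp
    have h1 := hbnd ν1 inferInstance
    have h0 := hbnd ν0 inferInstance
    rw [abs_le]
    constructor <;> simp only [deltaPsi] <;> nlinarith [h1.1, h1.2, h0.1, h0.2]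
  have key : ∀ (π : X → Fin K → ℝ) (ψ : Y → ℝ), IsPolicy K π → IsDecoder ψ →
      (polValue d0 R π - polValue d0 R (uniformPolicy X K)) * deltaPsi ν1 ν0 ψ
        ≤ polValue d0 R (uniformPolicy X K) := by
    intro π ψ hπ hψ
    have hV2 : polValue d0 R π ≤ 2 * polValue d0 R (uniformPolicy X K) := by
      have h2 : (K:ℝ) = 2 := by rw [hK2]; norm_num
      have := hmain π hπ
      rw [h2] at this
      exact this
    have hVu : 0 ≤ polValue d0 R (uniformPolicy X K) := hVnn _ hunif
    have habs : |polValue d0 R π - polValue d0 R (uniformPolicy X K)|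
        ≤ polValue d0 R (uniformPolicy X K) := by
      rw [abs_le]; constructor <;> nlinarith [hVnn π hπ]
    calc (polValue d0 R π - polValue d0 R (uniformPolicy X K)) * deltaPsi ν1 ν0 ψ
        ≤ |(polValue d0 R π - polValue d0 R (uniformPolicy X K)) * deltaPsi ν1 ν0 ψ| :=
          le_abs_self _
      _ = |polValue d0 R π - polValue d0 R (uniformPolicy X K)| * |deltaPsi ν1 ν0 ψ| :=
          abs_mul _ _
      _ ≤ polValue d0 R (uniformPolicy X K) * 1 :=
          mul_le_mul habs (hdelta ψ hψ) (abs_nonneg _) hVu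
      _ = polValue d0 R (uniformPolicy X K) := mul_one _
  refine ⟨key, fun η hη πstar ψstar hπ hψ hcontra => ?_⟩
  have := key πstar ψstar hπ hψ
  linarith

end IGL
end
end
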